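/- Let $1<q<\infty$, $\beta>0$, $d\ge 2$, and $\mu(dx)=\exp(-\beta|x|^q)\,dx$. For every nonnegative $f\in C_0^1(\mathbb{R}^d)$ vanishing on the unit ball $B(0,1)$, one has $\beta q\int f\,|x|^{q-1}\,\mu(dx)\le \int|\nabla f|\,\mu(dx)+(d-1)\int f\,\mu(dx)$. -/

import Mathlib

open MeasureTheory Metric Filter Topology
open scoped ENNReal

noncomputable section

abbrev E (d : ℕ) := EuclideanSpace ℝ (Fin d)


lemma aux_cont {d : ℕ} (u : E d → ℝ) (hu : ContDiff ℝ 1 u) (v : E d) :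
    Continuous fun x => fderiv ℝ u x v :=
  (hu.continuous_fderiv one_ne_zero).clm_apply continuous_const

lemma aux_int {d : ℕ} (u : E d → ℝ) (hu : ContDiff ℝ 1 u) (hs : HasCompactSupport u) (v : E d) :
    Integrable (fun x => fderiv ℝ u x v) := by
  have hcs : HasCompactSupport fun x => fderiv ℝ u x v :=
    (hs.fderiv ℝ).comp_left (g := fun L : E d →L[ℝ] ℝ => L v) rfl
  exact (aux_cont u hu v).integrable_of_hasCompactSupport hcs

lemma aux_ibp {d : ℕ} (u : E d → ℝ) (hu : ContDiff ℝ 1 u) (hs : HasCompactSupport u) (v : E d) :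
    ∫ x, fderiv ℝ u x v = 0 := by
  have h := integral_mul_fderiv_eq_neg_fderiv_mul_of_integrable (μ := volume)
    (f := u) (g := fun _ => (1:ℝ)) (v := v)
    ?_ ?_ ?_ (fun x _ => (hu.differentiable one_ne_zero) x) (fun x _ => (differentiable_const (1:ℝ)) x)
  · have h2 : (∫ (x : E d), u x * (fderiv ℝ (fun _ => (1:ℝ)) x) v) = 0 := by
      simp [fderiv_const]
    rw [h2] at h
    have h3 : (∫ (x : E d), (fderiv ℝ u x) v * 1) = ∫ (x : E d), (fderiv ℝ u x) v := by
      simp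
    rw [h3] at h
    linarith
  · simpa [mul_one] using aux_int u hu hs v
  · simp [fderiv_const]
  · simpa [mul_one] using (hu.continuous).integrable_of_hasCompactSupport hs

lemma hasFDerivAt_norm' {d : ℕ} {x : E d} (hx : x ≠ 0) :
    HasFDerivAt (fun y : E d => ‖y‖) (‖x‖⁻¹ • innerSL ℝ x) x := by
  have hnx : (0:ℝ) < ‖x‖ := norm_pos_iff.mpr hx
  have h1 : HasFDerivAt (fun y : E d => ‖y‖ ^ 2) ((2:ℝ) • innerSL ℝ x) x := by
    refine ((hasFDerivAt_id x).norm_sq).congr_fderiv ?_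
    ext v
    simp [two_smul]
  have h2 : HasDerivAt Real.sqrt (1 / (2 * Real.sqrt (‖x‖ ^ 2))) (‖x‖ ^ 2) :=
    Real.hasDerivAt_sqrt (by positivity)
  have h3 := h2.comp_hasFDerivAt x h1
  have heq : (Real.sqrt ∘ fun y : E d => ‖y‖ ^ 2) = fun y : E d => ‖y‖ := by
    funext y; simp [Function.comp, Real.sqrt_sq (norm_nonneg y)]
  rw [heq] at h3
  refine h3.congr_fderiv ?_
  rw [Real.sqrt_sq (norm_nonneg x), smul_smul]
  congr 1
  field_simp

/-- For `μ(dx) = exp(-β|x|^q) dx`, `d ≥ 2`, `1 < q < ∞`,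
`β > 0`, and every nonnegative `f ∈ C_0^1(ℝ^d)` vanishing on the unit ball:
`βq ∫ f |x|^{q-1} dμ ≤ ∫ |∇f| dμ + (d-1) ∫ f dμ`. -/
theorem stmt9 (d : ℕ) (hd : 2 ≤ d) (q β : ℝ) (hq : 1 < q) (hβ : 0 < β)
    (f : E d → ℝ) (hf : ContDiff ℝ 1 f) (hsupp : HasCompactSupport f)
    (hf0 : ∀ x, 0 ≤ f x) (hvan : ∀ x ∈ ball (0 : E d) 1, f x = 0) :
    β * q * ∫ x, f x * ‖x‖ ^ (q - 1) * Real.exp (-β * ‖x‖ ^ q) ≤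
      (∫ x, ‖gradient f x‖ * Real.exp (-β * ‖x‖ ^ q)) +
        ((d : ℝ) - 1) * ∫ x, f x * Real.exp (-β * ‖x‖ ^ q) := by
  have hq0 : (0:ℝ) < q := lt_trans one_pos hq
  set eF : E d → ℝ := fun x => Real.exp (-β * ‖x‖ ^ q) with heF
  set G : E d → ℝ := fun x => ‖x‖⁻¹ * eF x with hGdef
  set F : E d → ℝ := fun x => f x * G x with hFdef
  -- eventual vanishing near points of the unit ball
  have hfev : ∀ x : E d, ‖x‖ < 1 → f =ᶠ[𝓝 x] (fun _ => (0:ℝ)) := by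
    intro x hx
    have hmem : ball (0:E d) 1 ∈ 𝓝 x :=
      isOpen_ball.mem_nhds (by simpa [mem_ball, dist_zero_right] using hx)
    filter_upwards [hmem] with y hy
    exact hvan y hy
  -- continuity of eF
  have hecont : Continuous eF := by
    exact Real.continuous_exp.comp
      (continuous_const.mul (continuous_norm.rpow_const fun x => Or.inr hq0.le))
  have hepos : ∀ x : E d, 0 < eF x := fun x => Real.exp_pos _
  -- derivative of G away from 0
  have hGat : ∀ x : E d, x ≠ 0 → HasFDerivAt G
      (((-(‖x‖^2)⁻¹ * eF x + ‖x‖⁻¹ * (eF x * (-β * (q * ‖x‖ ^ (q-1))))) * ‖x‖⁻¹) • innerSL ℝ x) x := by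
    intro x hx
    have hnx : ‖x‖ ≠ 0 := norm_ne_zero_iff.mpr hx
    have ha : HasDerivAt (fun t:ℝ => t⁻¹) (-((‖x‖:ℝ)^2)⁻¹) ‖x‖ := hasDerivAt_inv hnx
    have hb : HasDerivAt (fun t:ℝ => t ^ q) (q * ‖x‖ ^ (q-1)) ‖x‖ :=
      Real.hasDerivAt_rpow_const (Or.inl hnx)
    have hc : HasDerivAt (fun t:ℝ => Real.exp (-β * t ^ q))
        (Real.exp (-β * ‖x‖ ^ q) * (-β * (q * ‖x‖ ^ (q-1)))) ‖x‖ := (hb.const_mul (-β)).exp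
    have hφ := ha.mul hc
    have h3 := hφ.comp_hasFDerivAt x (hasFDerivAt_norm' hx)
    have heq : (((fun t:ℝ => t⁻¹) * fun t:ℝ => Real.exp (-β * t ^ q)) ∘ norm) = G := by
      funext y; simp [hGdef, heF, Function.comp]
    rw [heq] at h3
    refine h3.congr_fderiv ?_
    rw [smul_smul]
  -- F is C¹
  have hFc : ContDiff ℝ 1 F := by
    rw [contDiff_iff_contDiffAt]
    intro x
    by_cases hx1 : ‖x‖ < 1
    · have hFe : F =ᶠ[𝓝 x] (fun _ => (0:ℝ)) := by
        filter_upwards [hfev x hx1] with y hy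
        simp [hFdef, hy]
      exact (contDiffAt_const (c := (0:ℝ))).congr_of_eventuallyEq hFe
    · have hx : x ≠ 0 := by
        intro h; rw [h] at hx1; simp at hx1
      have hnx : ‖x‖ ≠ 0 := norm_ne_zero_iff.mpr hx
      have hpow : ContDiffAt ℝ 1 (fun y : E d => ‖y‖ ^ q) x :=
        (Real.contDiffAt_rpow_const_of_ne hnx).comp x (contDiffAt_norm ℝ hx)
      have hexp : ContDiffAt ℝ 1 eF x :=
        (Real.contDiff_exp.contDiffAt).comp x (contDiffAt_const.mul hpow)
      have hG : ContDiffAt ℝ 1 G x := (((contDiffAt_norm ℝ hx).inv hnx)).mul hexp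
      exact (hf.contDiffAt).mul hG
  have hFs : HasCompactSupport F := hsupp.mul_right
  -- divergence theorem for the field F x • x
  have hVc : ∀ i : Fin d, ContDiff ℝ 1 (fun y : E d => F y * y i) := by
    intro i
    exact hFc.mul (by fun_prop)
  have hVs : ∀ i : Fin d, HasCompactSupport (fun y : E d => F y * y i) := by
    intro i
    exact hFs.mul_right
  have hVder : ∀ (i : Fin d) (x : E d), fderiv ℝ (fun y : E d => F y * y i) x =
      F x • (EuclideanSpace.proj i : E d →L[ℝ] ℝ) + x i • fderiv ℝ F x := by
    intro i x
    exact ((hFc.differentiable one_ne_zero x).hasFDerivAt.mul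
      ((EuclideanSpace.proj (𝕜 := ℝ) i).hasFDerivAt)).fderiv
  have hxsum : ∀ x : E d, ∑ i, x i • EuclideanSpace.single i (1:ℝ) = x := by
    intro x
    ext j
    have : (∑ i, x i • EuclideanSpace.single i (1:ℝ)) j
        = ∑ i, (x i • EuclideanSpace.single i (1:ℝ)) j := by rw [WithLp.ofLp_sum]; exact Finset.sum_apply j Finset.univ _
    rw [this]
    simp [EuclideanSpace.single_apply]
  have hsum : ∀ x : E d, ∑ i, fderiv ℝ (fun y : E d => F y * y i) x (EuclideanSpace.single i 1)
      = fderiv ℝ F x x + (d:ℝ) * F x := by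
    intro x
    have hterm : ∀ i : Fin d, fderiv ℝ (fun y : E d => F y * y i) x (EuclideanSpace.single i 1)
        = F x + x i * fderiv ℝ F x (EuclideanSpace.single i 1) := by
      intro i
      rw [hVder i x]
      simp [EuclideanSpace.single_apply]
    rw [Finset.sum_congr rfl fun i _ => hterm i, Finset.sum_add_distrib]
    have h1 : ∑ _i : Fin d, F x = (d:ℝ) * F x := by
      simp [Finset.sum_const, Finset.card_univ, nsmul_eq_mul]
    have h2 : ∑ i, x i * fderiv ℝ F x (EuclideanSpace.single i 1) = fderiv ℝ F x x := by
      rw [← hxsum x, map_sum]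
      simp only [ContinuousLinearMap.map_smul, smul_eq_mul]
      rw [hxsum x]
    rw [h1, h2]
    ring
  have hdiv : ∫ x, (fderiv ℝ F x x + (d:ℝ) * F x) = 0 := by
    have h1 : ∫ x, (fderiv ℝ F x x + (d:ℝ) * F x)
        = ∫ x, ∑ i, fderiv ℝ (fun y : E d => F y * y i) x (EuclideanSpace.single i 1) :=
      integral_congr_ae (Eventually.of_forall fun x => (hsum x).symm)
    rw [h1, integral_finset_sum Finset.univ
      (fun i _ => aux_int _ (hVc i) (hVs i) (EuclideanSpace.single i 1))]
    exact Finset.sum_eq_zero fun i _ => aux_ibp _ (hVc i) (hVs i) _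
  set T1 : E d → ℝ := fun x => fderiv ℝ f x (‖x‖⁻¹ • x) * eF x with hT1
  set T2 : E d → ℝ := fun x => f x * ‖x‖⁻¹ * eF x with hT2
  set T3 : E d → ℝ := fun x => f x * ‖x‖ ^ (q-1) * eF x with hT3
  -- pointwise identity for the divergence
  have hptw : ∀ x : E d, fderiv ℝ F x x + (d:ℝ) * F x =
      T1 x + ((d:ℝ)-1) * T2 x - β * q * T3 x := by
    intro x
    simp only [hT1, hT2, hT3]
    by_cases hx1 : ‖x‖ < 1
    · have hfe := hfev x hx1
      have hFe : F =ᶠ[𝓝 x] (fun _ => (0:ℝ)) := by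
        filter_upwards [hfe] with y hy; simp [hFdef, hy]
      have h1 : fderiv ℝ F x = 0 := by rw [hFe.fderiv_eq]; simp
      have h2 : fderiv ℝ f x = 0 := by
        rw [hfe.fderiv_eq]; simp
      have h3 : F x = 0 := hFe.eq_of_nhds
      have h4 : f x = 0 := hfe.eq_of_nhds
      simp [h1, h2, h3, h4]
    · have hx : x ≠ 0 := by intro h; rw [h] at hx1; simp at hx1
      have hnx : ‖x‖ ≠ 0 := norm_ne_zero_iff.mpr hx
      have hF' := ((hf.differentiable one_ne_zero x).hasFDerivAt.mul (hGat x hx)).fderiv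
      rw [show fderiv ℝ F x = fderiv ℝ (f * G) x from rfl, hF']
      have hi : (innerSL ℝ x) x = ‖x‖^2 := real_inner_self_eq_norm_sq x
      have hmap : fderiv ℝ f x (‖x‖⁻¹ • x) = ‖x‖⁻¹ * fderiv ℝ f x x := by
        rw [ContinuousLinearMap.map_smul]; simp
      simp only [ContinuousLinearMap.add_apply, ContinuousLinearMap.smul_apply, smul_eq_mul,
        hi, hmap, hGdef, hFdef]
      field_simp
      ring
  -- auxiliary continuity and support facts
  have hdzero : ∀ x : E d, ‖x‖ < 1 → fderiv ℝ f x = 0 := by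
    intro x hx; rw [(hfev x hx).fderiv_eq]; simp
  have hT1cont : Continuous T1 := by
    rw [hT1]
    refine Continuous.mul ?_ hecont
    rw [continuous_iff_continuousAt]; intro x
    by_cases hx1 : ‖x‖ < 1
    · have hev : (fun y : E d => fderiv ℝ f y (‖y‖⁻¹ • y)) =ᶠ[𝓝 x] (fun _ => (0:ℝ)) := by
        have hmem : ball (0:E d) 1 ∈ 𝓝 x :=
          isOpen_ball.mem_nhds (by simpa [mem_ball, dist_zero_right] using hx1)
        filter_upwards [hmem] with y hy
        rw [hdzero y (by simpa [mem_ball, dist_zero_right] using hy)]; simp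
      exact continuousAt_const.congr hev.symm
    · have hx : x ≠ 0 := by intro h; rw [h] at hx1; simp at hx1
      have hnx : ‖x‖ ≠ 0 := norm_ne_zero_iff.mpr hx
      have h1 : ContinuousAt (fun y : E d => (fderiv ℝ f y, ‖y‖⁻¹ • y)) x :=
        ((hf.continuous_fderiv one_ne_zero).continuousAt).prodMk
          (((continuous_norm.continuousAt).inv₀ hnx).smul continuousAt_id)
      exact (isBoundedBilinearMap_apply.continuous.continuousAt).comp h1
  have hT2cont : Continuous T2 := by
    rw [hT2]
    refine Continuous.mul ?_ hecont
    rw [continuous_iff_continuousAt]; intro x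
    by_cases hx1 : ‖x‖ < 1
    · have hev : (fun y : E d => f y * ‖y‖⁻¹) =ᶠ[𝓝 x] (fun _ => (0:ℝ)) := by
        filter_upwards [hfev x hx1] with y hy
        simp [hy]
      exact continuousAt_const.congr hev.symm
    · have hx : x ≠ 0 := by intro h; rw [h] at hx1; simp at hx1
      have hnx : ‖x‖ ≠ 0 := norm_ne_zero_iff.mpr hx
      exact (hf.continuous.continuousAt).mul ((continuous_norm.continuousAt).inv₀ hnx)
  have hT3cont : Continuous T3 := by
    rw [hT3]
    exact (hf.continuous.mul (continuous_norm.rpow_const fun x => Or.inr (by linarith))).mul hecont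
  have hgradnorm : ∀ x : E d, ‖gradient f x‖ = ‖fderiv ℝ f x‖ := by
    intro x; rw [gradient]
    exact (InnerProductSpace.toDual ℝ (E d)).symm.norm_map _
  have hgcont : Continuous fun x : E d => ‖gradient f x‖ * eF x := by
    have heq : (fun x : E d => ‖gradient f x‖ * eF x) = fun x => ‖fderiv ℝ f x‖ * eF x :=
      funext fun x => by rw [hgradnorm]
    rw [heq]
    exact ((hf.continuous_fderiv one_ne_zero).norm).mul hecont
  have hcsT1 : HasCompactSupport T1 := by
    refine HasCompactSupport.intro (hsupp.fderiv ℝ) fun x hx => ?_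
    have h0 : fderiv ℝ f x = 0 := image_eq_zero_of_notMem_tsupport hx
    simp [hT1, h0]
  have hcsg : HasCompactSupport fun x : E d => ‖gradient f x‖ * eF x := by
    refine HasCompactSupport.intro (hsupp.fderiv ℝ) fun x hx => ?_
    have h0 : fderiv ℝ f x = 0 := image_eq_zero_of_notMem_tsupport hx
    simp [hgradnorm, h0]
  have hcsT2 : HasCompactSupport T2 := by
    refine HasCompactSupport.intro hsupp fun x hx => ?_
    simp [hT2, image_eq_zero_of_notMem_tsupport hx]
  have hcsT3 : HasCompactSupport T3 := by
    refine HasCompactSupport.intro hsupp fun x hx => ?_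
    simp [hT3, image_eq_zero_of_notMem_tsupport hx]
  have hcsfe : HasCompactSupport fun x : E d => f x * eF x := by
    refine HasCompactSupport.intro hsupp fun x hx => ?_
    simp [image_eq_zero_of_notMem_tsupport hx]
  have intT1 : Integrable T1 := hT1cont.integrable_of_hasCompactSupport hcsT1
  have intT2 : Integrable T2 := hT2cont.integrable_of_hasCompactSupport hcsT2
  have intT3 : Integrable T3 := hT3cont.integrable_of_hasCompactSupport hcsT3
  have int_ge : Integrable (fun x : E d => ‖gradient f x‖ * eF x) :=
    hgcont.integrable_of_hasCompactSupport hcsg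
  have int_fe : Integrable (fun x : E d => f x * eF x) :=
    (hf.continuous.mul hecont).integrable_of_hasCompactSupport hcsfe
  -- the integral identity
  have hdiv2 : ∫ x, (T1 x + ((d:ℝ)-1) * T2 x - β * q * T3 x) = 0 := by
    rw [← hdiv]
    exact integral_congr_ae (Eventually.of_forall fun x => (hptw x).symm)
  have hsplit : (∫ x, T1 x) + ((d:ℝ)-1) * (∫ x, T2 x) - β * q * (∫ x, T3 x) = 0 := by
    have h := hdiv2
    rw [integral_sub (by exact intT1.add (intT2.const_mul _)) (by exact intT3.const_mul _),
      integral_add intT1 (by exact intT2.const_mul _), integral_const_mul, integral_const_mul] at h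
    exact h
  -- pointwise bounds
  have hb1 : ∀ x, T1 x ≤ ‖gradient f x‖ * eF x := by
    intro x
    rw [hgradnorm, hT1]
    refine mul_le_mul_of_nonneg_right ?_ (hepos x).le
    have h1 : fderiv ℝ f x (‖x‖⁻¹ • x) ≤ ‖fderiv ℝ f x‖ * ‖(‖x‖⁻¹ • x)‖ := by
      have h0 := (fderiv ℝ f x).le_opNorm (‖x‖⁻¹ • x)
      rw [Real.norm_eq_abs] at h0
      exact le_trans (le_abs_self _) h0
    have h2 : ‖(‖x‖⁻¹ • x)‖ ≤ 1 := by
      rcases eq_or_ne x 0 with rfl | hx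
      · simp
      · rw [norm_smul, norm_inv, norm_norm, inv_mul_cancel₀ (norm_ne_zero_iff.mpr hx)]
    calc fderiv ℝ f x (‖x‖⁻¹ • x) ≤ ‖fderiv ℝ f x‖ * ‖(‖x‖⁻¹ • x)‖ := h1
      _ ≤ ‖fderiv ℝ f x‖ * 1 := mul_le_mul_of_nonneg_left h2 (norm_nonneg _)
      _ = ‖fderiv ℝ f x‖ := mul_one _
  have hb2 : ∀ x, T2 x ≤ f x * eF x := by
    intro x
    rw [hT2]
    refine mul_le_mul_of_nonneg_right ?_ (hepos x).le
    by_cases hx1 : ‖x‖ < 1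
    · have h4 : f x = 0 := (hfev x hx1).eq_of_nhds
      simp [h4]
    · have h1 : (1:ℝ) ≤ ‖x‖ := not_lt.mp hx1
      have h2 : ‖x‖⁻¹ ≤ 1 := inv_le_one_of_one_le₀ h1
      calc f x * ‖x‖⁻¹ ≤ f x * 1 := mul_le_mul_of_nonneg_left h2 (hf0 x)
        _ = f x := mul_one _
  have hdge : (0:ℝ) ≤ (d:ℝ) - 1 := by
    have h2d : (2:ℝ) ≤ (d:ℝ) := by exact_mod_cast hd
    linarith
  have hI1 : ∫ x, T1 x ≤ ∫ x, ‖gradient f x‖ * eF x := integral_mono intT1 int_ge hb1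
  have hI2 : ∫ x, T2 x ≤ ∫ x, f x * eF x := integral_mono intT2 int_fe hb2
  have hfinal : β * q * (∫ x, T3 x) ≤
      (∫ x, ‖gradient f x‖ * eF x) + ((d:ℝ)-1) * ∫ x, f x * eF x := by
    have h3 := mul_le_mul_of_nonneg_left hI2 hdge
    linarith
  simpa only [hT3, heF] using hfinal
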